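/- Let n ∈ ℕ and T be an n-tower in a matroid M. For every k with 1 < k ≤ n, there exists i < k such that {e_{{i}}, e_{{i,k}}, e_{{k}}} is a triangle (3-element circuit) of M. -/

import Mathlib

open Set Matroid

namespace Paper

variable {α : Type*}

/-- `a` and `b` are parallel (possibly equal) nonloops of `M`. -/
def Para (M : Matroid α) (a b : α) : Prop :=
  M.Indep {a} ∧ M.Indep {b} ∧ b ∈ M.closure {a}

/-- The rank of a matroid. -/
noncomputable def rk (M : Matroid α) : ℕ :=
  sSup {n | ∃ I, M.Indep I ∧ I.ncard = n}

/-- `C` is a circuit of `M`: a minimal dependent set. -/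
def IsCircuit (M : Matroid α) (C : Set α) : Prop :=
  M.Dep C ∧ ∀ D ⊂ C, ¬ M.Dep D

/-- A matroid is simple if every subset of size at most two is independent. -/
def Simple (M : Matroid α) : Prop :=
  ∀ X ⊆ M.E, X.Finite → X.ncard ≤ 2 → M.Indep X

/-- The number of points (parallel classes of nonloops) of `M`. -/
noncomputable def eps (M : Matroid α) : ℕ :=
  {P : Set α | ∃ a, M.Indep {a} ∧ P = {b | Para M a b}}.ncard

/-- Contraction of the set `C` from `M`, defined by duality. -/
noncomputable def contract (M : Matroid α) (C : Set α) : Matroid α :=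
  (M✶ ↾ (M.E \ C))✶

/-- `N` is a minor of `M`: obtained by contracting a set `C` (with basis `I`) and
deleting some further elements. -/
def IsMinor (N M : Matroid α) : Prop :=
  ∃ C I, C ⊆ M.E ∧ M.IsBasis I C ∧ N.E ⊆ M.E \ C ∧
    ∀ X ⊆ N.E, (N.Indep X ↔ M.Indep (X ∪ I))

/-- `M` has a minor isomorphic to the rank-2 uniform matroid `U_{2,k}`. -/
def HasUnifMinor (M : Matroid α) (k : ℕ) : Prop :=
  ∃ N, IsMinor N M ∧ N.E.Finite ∧ N.E.ncard = k ∧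
    ∀ X ⊆ N.E, (N.Indep X ↔ X.ncard ≤ 2)

/-- `M` has a restriction isomorphic to `U_{2,k}`. -/
def HasUnifRestriction (M : Matroid α) (k : ℕ) : Prop :=
  ∃ X ⊆ M.E, X.Finite ∧ X.ncard = k ∧ ∀ Y ⊆ X, (M.Indep Y ↔ Y.ncard ≤ 2)

/-- `C` is the edge set of a cycle of the simple graph `G`. -/
def GraphicCircuit {V : Type*} (G : SimpleGraph V) (C : Set (Sym2 V)) : Prop :=
  ∃ (v : V) (w : G.Walk v v), w.IsCycle ∧ C = {e | e ∈ w.edges}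

/-- `N` is isomorphic to the cycle matroid of the simple graph `G`. -/
def IsGraphicIso {V : Type*} (N : Matroid α) (G : SimpleGraph V) : Prop :=
  ∃ f : α → Sym2 V, InjOn f N.E ∧ f '' N.E = G.edgeSet ∧
    ∀ C ⊆ N.E, (IsCircuit N C ↔ GraphicCircuit G (f '' C))

/-- `M` has a minor isomorphic to the cycle matroid `M(K_t)`. -/
def HasCliqueMinor (M : Matroid α) (t : ℕ) : Prop :=
  ∃ N, IsMinor N M ∧ IsGraphicIso N (SimpleGraph.completeGraph (Fin t))

/-- A simple graph has a `K_t`-minor, via branch sets. -/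
def HasGraphCliqueMinor {V : Type*} (G : SimpleGraph V) (t : ℕ) : Prop :=
  ∃ f : V → Option (Fin t),
    (∀ i : Fin t, (G.induce {v | f v = some i}).Connected) ∧
    ∀ i j : Fin t, i ≠ j → ∃ u v, f u = some i ∧ f v = some j ∧ G.Adj u v

/-- The extremal density threshold `d(t)` for `K_t`-minors. -/
noncomputable def dthr (t : ℕ) : ℝ :=
  sInf {c : ℝ | ∀ (n : ℕ) (G : SimpleGraph (Fin n)),
    (G.edgeSet.ncard : ℝ) > c * n → HasGraphCliqueMinor G t}

/-- A multigraph: loops and parallel edges allowed. -/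
structure Multigraph (V : Type*) (E : Type*) where
  ends : E → Sym2 V

/-- A cycle in a multigraph: distinct vertices `v_0, …, v_n` and distinct edges
`e_0, …, e_n` with `e_i` joining `v_i` and `v_{i+1}` (cyclically).  The case `n = 0`
is a loop and `n = 1` a pair of parallel edges. -/
structure Cycle {V E : Type*} (G : Multigraph V E) where
  n : ℕ
  vtx : Fin (n+1) → V
  edge : Fin (n+1) → E
  vtx_inj : Function.Injective vtx
  edge_inj : Function.Injective edge
  ends_eq : ∀ i, G.ends (edge i) = s(vtx i, vtx (i+1))

/-- `C` is the edge set of a cycle of `G`. -/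
def IsCycleSet {V E : Type*} (G : Multigraph V E) (C : Set E) : Prop :=
  ∃ c : Cycle G, Set.range c.edge = C

/-- The edge set `X` induces a connected subgraph. -/
def EdgeConn {V E : Type*} (G : Multigraph V E) (X : Set E) : Prop :=
  X.Nonempty ∧ ∀ e ∈ X, ∀ f ∈ X,
    Relation.ReflTransGen (fun a b => a ∈ X ∧ b ∈ X ∧ ∃ v, v ∈ G.ends a ∧ v ∈ G.ends b) e f

/-- `X` contains (the edge sets of) at least two distinct cycles. -/
def TwoCycles {V E : Type*} (G : Multigraph V E) (X : Set E) : Prop :=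
  ∃ C₁ C₂, C₁ ⊆ X ∧ C₂ ⊆ X ∧ IsCycleSet G C₁ ∧ IsCycleSet G C₂ ∧ C₁ ≠ C₂

/-- `X` is the edge set of a minimal connected subgraph containing more than one
cycle; these are precisely the thetas and handcuffs of `G`. -/
def MinConnTwo {V E : Type*} (G : Multigraph V E) (X : Set E) : Prop :=
  EdgeConn G X ∧ TwoCycles G X ∧ ∀ Y ⊂ X, ¬ (EdgeConn G Y ∧ TwoCycles G Y)

/-- `X` is the edge set of a theta subgraph: a minimal connected subgraph with more
than one cycle that contains exactly three cycles. -/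
def IsTheta {V E : Type*} (G : Multigraph V E) (X : Set E) : Prop :=
  MinConnTwo G X ∧ {C | IsCycleSet G C ∧ C ⊆ X}.ncard = 3

/-- `(G, B)` is a biased graph: `B` is a set of cycles such that no theta contains
exactly two balanced cycles. -/
def IsBiased {V E : Type*} (G : Multigraph V E) (B : Set (Set E)) : Prop :=
  (∀ C ∈ B, IsCycleSet G C) ∧
  ∀ X, IsTheta G X → {C | C ⊆ X ∧ IsCycleSet G C ∧ C ∈ B}.ncard ≠ 2

/-- The circuits of the frame matroid `FM(G,B)`: balanced cycles, together with
thetas and handcuffs containing no balanced cycle. -/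
def FrameCircuit {V E : Type*} (G : Multigraph V E) (B : Set (Set E)) (C : Set E) : Prop :=
  (IsCycleSet G C ∧ C ∈ B) ∨ (MinConnTwo G C ∧ ∀ D ⊆ C, IsCycleSet G D → D ∉ B)

/-- `M` is the frame matroid `FM(G,B)` of the biased graph `(G,B)`: its ground set is
`E(G)` and its circuits are exactly the frame circuits. -/
def IsFM {V E : Type*} (G : Multigraph V E) (B : Set (Set E)) (M : Matroid E) : Prop :=
  M.E = univ ∧ ∀ C, IsCircuit M C ↔ FrameCircuit G B C

/-- Connectedness of a multigraph. -/
def MGConnected {V E : Type*} (G : Multigraph V E) : Prop :=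
  Nonempty V ∧ ∀ u v : V, Relation.ReflTransGen (fun a b => ∃ e, G.ends e = s(a,b)) u v

/-- `M` is framed by `B`: `B` is a base and every element is spanned by at most two
elements of `B`. -/
def IsFramed (M : Matroid α) (B : Set α) : Prop :=
  M.IsBase B ∧ ∀ e ∈ M.E, ∃ S ⊆ B, S.Finite ∧ S.ncard ≤ 2 ∧ e ∈ M.closure S

/-- A frame matroid: a restriction of a matroid framed by some set. -/
def IsFrameMatroid (M : Matroid α) : Prop :=
  ∃ (M' : Matroid α) (B R : Set α), IsFramed M' B ∧ R ⊆ M'.E ∧ M = M' ↾ R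

/-- A `B`-clique: a matroid framed by `B` in which every pair of elements of `B` lies
in a common triangle. -/
def IsBClique (M : Matroid α) (B : Set α) : Prop :=
  IsFramed M B ∧ ∀ a ∈ B, ∀ b ∈ B, a ≠ b →
    ∃ T, IsCircuit M T ∧ T.ncard = 3 ∧ a ∈ T ∧ b ∈ T

/-- Gain graphs over a group `Γ`. -/
structure GainGraph (V E Γ : Type*) [Group Γ] where
  src : E → V
  tgt : E → V
  gain : E → Γ

/-- The underlying multigraph of a gain graph. -/
def GainGraph.toMultigraph {V E Γ : Type*} [Group Γ] (G : GainGraph V E Γ) :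
    Multigraph V E :=
  ⟨fun e => s(G.src e, G.tgt e)⟩

open scoped Classical in
/-- `C` is the edge set of a balanced cycle of the gain graph `G`: the ordered product
of the gains (inverted when the edge is traversed against its direction) is `1`. -/
def GainGraph.BalancedSet {V E Γ : Type*} [Group Γ] (G : GainGraph V E Γ)
    (C : Set E) : Prop :=
  ∃ c : Cycle G.toMultigraph, Set.range c.edge = C ∧
    (List.ofFn (fun i => if G.src (c.edge i) = c.vtx i then G.gain (c.edge i)
      else (G.gain (c.edge i))⁻¹)).prod = 1

/-- `n`-towers in a matroid, indexed by the nonempty subsets of `[n] = {1, …, n}`. -/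
def IsTower (M : Matroid α) : ℕ → (Finset ℕ → α) → Prop
  | 0, _ => False
  | 1, e => M.Indep {e {1}}
  | n+2, e =>
    (∀ X : Finset ℕ, X.Nonempty → X ⊆ Finset.Icc 1 (n+1) →
       Para (contract M {e {n+2}}) (e X) (e (insert (n+2) X))) ∧
    (∃ X : Finset ℕ, X.Nonempty ∧ X ⊆ Finset.Icc 1 (n+1) ∧
       ¬ Para M (e X) (e (insert (n+2) X))) ∧
    IsTower M (n+1) e ∧ IsTower (contract M {e {n+2}}) (n+1) e ∧
    IsTower M (n+1) (fun X => e (insert (n+2) X)) ∧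
    IsTower (contract M {e {n+2}}) (n+1) (fun X => e (insert (n+2) X))

/-- Equivalence of `n`-towers: corresponding elements are parallel. -/
def TowerEquiv (M : Matroid α) (n : ℕ) (e e' : Finset ℕ → α) : Prop :=
  ∀ X : Finset ℕ, X.Nonempty → X ⊆ Finset.Icc 1 n → Para M (e X) (e' X)

/-- `w M i` is the number of equivalence classes of `i`-towers of `M` (for `i ≥ 1`),
with `w M 0 = r(M)`. -/
noncomputable def w (M : Matroid α) (i : ℕ) : ℕ :=
  if i = 0 then rk M else
    {s : Set (Finset ℕ → α) | ∃ e, IsTower M i e ∧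
      s = {e' | IsTower M i e' ∧ TowerEquiv M i e e'}}.ncard

/-- `G` is the projective geometry matroid on the projectivization of `W`:
a set of projective points is independent iff it admits a linearly independent
choice of representatives. -/
def IsPG {F : Type*} [Field F] {W : Type*} [AddCommGroup W] [Module F W]
    (G : Matroid (Projectivization F W)) : Prop :=
  G.E = univ ∧ ∀ I : Set (Projectivization F W),
    G.Indep I ↔ Projectivization.Independent (fun x : I => x.1)


section Aux

variable {α : Type*} {M : Matroid α} {a x y : α} {I J X Y : Set α}

lemma contract_ground' (M : Matroid α) (C : Set α) : (contract M C).E = M.E \ C := rfl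

lemma dual_spanning_compl (haE : a ∈ M.E) :
    M✶.Spanning (M.E \ {a}) ↔ M.Indep {a} := by
  have hR : M.E \ {a} ⊆ M✶.E := by rw [Matroid.dual_ground]; exact diff_subset
  rw [Matroid.spanning_iff_compl_coindep hR]
  have h1 : M✶.E \ (M.E \ {a}) = {a} := by
    rw [Matroid.dual_ground, Set.diff_diff_cancel_left (singleton_subset_iff.mpr haE)]
  rw [h1, Matroid.dual_coindep_iff]

lemma contract_indep_iff' (ha : M.Indep {a}) :
    (contract M {a}).Indep I ↔ M.Indep (insert a I) ∧ a ∉ I := by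
  have haE : a ∈ M.E := ha.subset_ground rfl
  have hR : M.E \ {a} ⊆ M✶.E := by rw [Matroid.dual_ground]; exact diff_subset
  rw [show contract M {a} = (M✶ ↾ (M.E \ {a}))✶ from rfl, Matroid.dual_indep_iff_exists',
    Matroid.restrict_ground_eq]
  constructor
  · rintro ⟨hIR, B, hB, hdj⟩
    rw [Matroid.isBase_restrict_iff hR] at hB
    have hsp : M✶.Spanning (M.E \ {a}) := (dual_spanning_compl haE).mpr ha
    have hBb : M✶.IsBase B := by
      refine hB.indep.isBase_of_ground_subset_closure ?_
      rw [hB.closure_eq_closure, (Matroid.spanning_iff_closure_eq hR).mp hsp]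
    have hMB : M.IsBase (M.E \ B) := hBb.compl_isBase_of_dual
    have haB : a ∉ B := fun h => (hB.subset h).2 rfl
    refine ⟨hMB.indep.subset ?_, fun h => (hIR h).2 rfl⟩
    rintro z (rfl | hz)
    · exact ⟨haE, haB⟩
    · exact ⟨(hIR hz).1, fun hzB => (hdj.ne_of_mem hz hzB) rfl⟩
  · rintro ⟨hIa, haI⟩
    obtain ⟨B₀, hB₀, hsub⟩ := hIa.exists_isBase_superset
    have haB₀ : a ∈ B₀ := hsub (mem_insert _ _)
    have hIB₀ : I ⊆ B₀ := (subset_insert _ _).trans hsub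
    have hIR : I ⊆ M.E \ {a} := fun z hz =>
      ⟨hIa.subset_ground (mem_insert_of_mem _ hz), fun h => haI (h ▸ hz)⟩
    refine ⟨hIR, M.E \ B₀, ?_, ?_⟩
    · rw [Matroid.isBase_restrict_iff hR]
      have hdb : M✶.IsBase (M.E \ B₀) := hB₀.compl_isBase_dual
      rw [Matroid.isBasis_iff_indep_closure]
      refine ⟨hdb.indep, ?_, fun z hz => ⟨hz.1, fun h => hz.2 (h ▸ haB₀)⟩⟩
      rw [hdb.closure_eq]; exact hR
    · exact Set.disjoint_left.mpr fun z hz hz2 => hz2.2 (hIB₀ hz)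

lemma indep_of_contract_indep (ha : M.Indep {a}) (h : (contract M {a}).Indep I) :
    M.Indep I := by
  rw [contract_indep_iff' ha] at h
  exact h.1.subset (subset_insert _ _)

lemma contract_closure_subset' (ha : M.Indep {a}) (X : Set α) :
    (contract M {a}).closure X ⊆ M.closure (insert a X) := by
  set N := contract M {a} with hN
  have hNE : N.E = M.E \ {a} := rfl
  intro y hy
  have hyE : y ∈ N.E := N.closure_subset_ground _ hy
  rw [← N.closure_inter_ground X] at hy
  obtain ⟨I, hI⟩ := N.exists_isBasis (X ∩ N.E) inter_subset_right
  have hyI : y ∈ N.closure I := by rw [hI.closure_eq_closure]; exact hy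
  have hIX : I ⊆ X := hI.subset.trans inter_subset_left
  have hIE : I ⊆ N.E := hI.subset.trans inter_subset_right
  have hmono : M.closure (insert a I) ⊆ M.closure (insert a X) :=
    M.closure_subset_closure (insert_subset_insert hIX)
  by_cases hyI' : y ∈ I
  · exact hmono (M.mem_closure_of_mem' (mem_insert_of_mem _ hyI') hyE.1)
  have hdep : N.Dep (insert y I) := (hI.indep.mem_closure_iff_of_notMem hyI').mp hyI
  have hMI : M.Indep (insert a I) := ((contract_indep_iff' ha).mp hI.indep).1
  have hya : y ≠ a := hyE.2
  have hyaI : y ∉ insert a I := by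
    rintro (rfl | h); exact hya rfl; exact hyI' h
  refine hmono ((hMI.mem_closure_iff_of_notMem hyaI).mpr ⟨?_, ?_⟩)
  · intro hind
    rw [Set.insert_comm] at hind
    exact hdep.not_indep ((contract_indep_iff' ha).mpr
      ⟨hind, by rintro (rfl | h); exact hya rfl; exact (hIE h).2 rfl⟩)
  · exact insert_subset hyE.1 (insert_subset (ha.subset_ground rfl)
      (fun z hz => (hIE hz).1))

lemma para_of_contract_para (hna : ¬ M.Indep {a}) (h : Para (contract M {a}) x y) :
    Para M x y := by
  by_cases haE : a ∈ M.E
  swap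
  · have hEq : contract M {a} = M := by
      rw [show contract M {a} = (M✶ ↾ (M.E \ {a}))✶ from rfl,
        diff_singleton_eq_self haE, show M.E = M✶.E from rfl,
        Matroid.restrict_ground_eq_self, Matroid.dual_dual]
    rwa [hEq] at h
  -- a is a loop of M
  set N := contract M {a} with hNdef
  have hR : M.E \ {a} ⊆ M✶.E := by rw [Matroid.dual_ground]; exact diff_subset
  have hNE : N.E = M.E \ {a} := rfl
  have hnsp : ¬ M✶.Spanning (M.E \ {a}) := fun h => hna ((dual_spanning_compl haE).mp h)
  have hEins : insert a (M.E \ {a}) = M✶.E := by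
    rw [Matroid.dual_ground, insert_diff_singleton, insert_eq_self.mpr haE]
  have hacl : a ∉ M✶.closure (M.E \ {a}) := by
    intro hcl
    apply hnsp
    rw [Matroid.spanning_iff_closure_eq hR, ← Matroid.closure_insert_eq_of_mem_closure hcl,
      hEins, Matroid.closure_ground]
  have fwd : ∀ J, N.Indep J → M.Indep J := by
    intro J hJ
    rw [show N = (M✶ ↾ (M.E \ {a}))✶ from rfl, Matroid.dual_indep_iff_exists',
      Matroid.restrict_ground_eq] at hJ
    obtain ⟨hJR, B, hB, hdj⟩ := hJ
    rw [Matroid.isBase_restrict_iff hR] at hB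
    have haB : a ∉ B := fun h => (hB.subset h).2 rfl
    have hclB : a ∉ M✶.closure B := by rw [hB.closure_eq_closure]; exact hacl
    have hiaB : M✶.Indep (insert a B) :=
      (hB.indep.insert_indep_iff_of_notMem haB).mpr ⟨by rwa [Matroid.dual_ground], hclB⟩
    have hbase : M✶.IsBase (insert a B) := by
      refine hiaB.isBase_of_ground_subset_closure ?_
      rw [show M✶.E = insert a (M.E \ {a}) from hEins.symm]
      refine insert_subset (M✶.mem_closure_of_mem' (mem_insert _ _)
        (by rwa [Matroid.dual_ground])) ?_
      exact hB.subset_closure.trans (M✶.closure_subset_closure (subset_insert _ _))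
    have hMB : M.IsBase (M.E \ insert a B) := hbase.compl_isBase_of_dual
    refine hMB.indep.subset fun z hz => ⟨(hJR hz).1, ?_⟩
    rintro (rfl | hzB)
    · exact (hJR hz).2 rfl
    · exact (hdj.ne_of_mem hz hzB) rfl
  have bwd : ∀ J, J ⊆ M.E \ {a} → M.Indep J → N.Indep J := by
    intro J hJR hJ
    obtain ⟨B₀, hB₀, hsub⟩ := hJ.exists_isBase_superset
    have haB₀ : a ∉ B₀ := fun h => hna (hB₀.indep.subset (singleton_subset_iff.mpr h))
    set B : Set α := (M.E \ B₀) \ {a} with hBdef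
    have hEB : M.E \ B₀ = insert a B := by
      ext z
      simp only [hBdef, mem_insert_iff, mem_diff, mem_singleton_iff]
      constructor
      · rintro ⟨hz1, hz2⟩
        by_cases hza : z = a
        · exact Or.inl hza
        · exact Or.inr ⟨⟨hz1, hz2⟩, hza⟩
      · rintro (rfl | ⟨⟨hz1, hz2⟩, _⟩)
        · exact ⟨haE, haB₀⟩
        · exact ⟨hz1, hz2⟩
    have hdb : M✶.IsBase (insert a B) := hEB ▸ hB₀.compl_isBase_dual
    have hBR : B ⊆ M.E \ {a} := fun z hz => ⟨hz.1.1, hz.2⟩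
    have hBi : M✶.Indep B := hdb.indep.subset (subset_insert _ _)
    have hRcl : M.E \ {a} ⊆ M✶.closure B := by
      intro z hz
      by_cases hzB : z ∈ B
      · exact M✶.mem_closure_of_mem' hzB (hR hz)
      by_contra hzcl
      have hz2 : z ∈ M✶.closure (insert a B) := by rw [hdb.closure_eq]; exact hR hz
      have h3 := Matroid.mem_closure_insert hzcl hz2
      exact hacl (M✶.closure_subset_closure (insert_subset hz hBR) h3)
    have hbasis : M✶.IsBasis B (M.E \ {a}) :=
      Matroid.isBasis_iff_indep_closure.mpr ⟨hBi, hRcl, hBR⟩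
    rw [show N = (M✶ ↾ (M.E \ {a}))✶ from rfl, Matroid.dual_indep_iff_exists',
      Matroid.restrict_ground_eq]
    exact ⟨hJR, B, (Matroid.isBase_restrict_iff hR).mpr hbasis,
      Set.disjoint_left.mpr fun z hz h2 => h2.1.2 (hsub hz)⟩
  obtain ⟨hx, hy, hyc⟩ := h
  have hxE : x ∈ N.E := hx.subset_ground rfl
  have hyE : y ∈ N.E := hy.subset_ground rfl
  rw [hNE] at hxE hyE
  refine ⟨fwd _ hx, fwd _ hy, ?_⟩
  by_cases hxy : y = x
  · exact hxy ▸ M.mem_closure_self x hxE.1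
  have hdep : N.Dep (insert y {x}) :=
    (hx.mem_closure_iff_of_notMem (by simpa using hxy)).mp hyc
  have hni : ¬ M.Indep (insert y {x}) := fun hi =>
    hdep.not_indep (bwd _ (insert_subset hyE (singleton_subset_iff.mpr hxE)) hi)
  exact ((fwd _ hx).mem_closure_iff_of_notMem (by simpa using hxy)).mpr
    ⟨hni, insert_subset hyE.1 (singleton_subset_iff.mpr hxE.1)⟩

end Aux

section Towers

variable {α : Type*} {M : Matroid α} {e : Finset ℕ → α}

lemma isTower_succ_iff {n : ℕ} :
    IsTower M (n+2) e ↔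
    (∀ X : Finset ℕ, X.Nonempty → X ⊆ Finset.Icc 1 (n+1) →
       Para (contract M {e {n+2}}) (e X) (e (insert (n+2) X))) ∧
    (∃ X : Finset ℕ, X.Nonempty ∧ X ⊆ Finset.Icc 1 (n+1) ∧
       ¬ Para M (e X) (e (insert (n+2) X))) ∧
    IsTower M (n+1) e ∧ IsTower (contract M {e {n+2}}) (n+1) e ∧
    IsTower M (n+1) (fun X => e (insert (n+2) X)) ∧
    IsTower (contract M {e {n+2}}) (n+1) (fun X => e (insert (n+2) X)) := Iff.rfl

lemma isTower_of_le : ∀ n, IsTower M n e → ∀ m, 1 ≤ m → m ≤ n → IsTower M m e := by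
  intro n
  induction n with
  | zero => intro h; exact h.elim
  | succ p ih =>
    intro h m hm1 hmn
    rcases eq_or_lt_of_le hmn with rfl | hlt
    · exact h
    have hmp : m ≤ p := Nat.lt_succ_iff.mp hlt
    match p, h with
    | 0, h => omega
    | q+1, h => exact ih h.2.2.1 m hm1 hmp

lemma tower_top_indep {n : ℕ} (h : IsTower M (n+2) e) : M.Indep {e {n+2}} := by
  by_contra hna
  obtain ⟨hA, ⟨X, hXne, hXss, hXnp⟩, -⟩ := h
  exact hXnp (para_of_contract_para hna (hA X hXne hXss))

lemma tower_spanning : ∀ n {M : Matroid α} {e : Finset ℕ → α}, IsTower M n e →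
    ∀ X : Finset ℕ, X.Nonempty → X ⊆ Finset.Icc 1 n →
      e X ∈ M.closure ((fun i => e {i}) '' (X : Set ℕ)) := by
  intro n
  induction n with
  | zero => intro M e h; exact h.elim
  | succ p ih =>
    match p with
    | 0 =>
      intro M e h X hXne hXss
      have hX1 : X = {1} := by
        rw [Finset.Icc_self] at hXss
        rcases Finset.subset_singleton_iff.mp hXss with rfl | rfl
        · exact absurd hXne (by simp)
        · rfl
      subst hX1
      simpa using M.mem_closure_self (e {1}) (h.subset_ground rfl)
    | m+1 =>
      intro M e h X hXne hXss
      have ha : M.Indep {e {m+2}} := tower_top_indep h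
      obtain ⟨hA, hB, hT1, hTN, hT2, hTN2⟩ := h
      have haE : e {m+2} ∈ M.E := ha.subset_ground rfl
      by_cases hmem : m + 2 ∈ X
      · set Y := X.erase (m+2) with hYdef
        have hXY : insert (m+2) Y = X := Finset.insert_erase hmem
        have hYss : Y ⊆ Finset.Icc 1 (m+1) := by
          intro i hi
          have h1 := hXss (Finset.erase_subset _ _ hi)
          rw [Finset.mem_Icc] at h1 ⊢
          have : i ≠ m + 2 := (Finset.mem_erase.mp hi).1
          omega
        have hJeq : ((fun i => e {i}) '' (X : Set ℕ)) =
            insert (e {m+2}) ((fun i => e {i}) '' (Y : Set ℕ)) := by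
          rw [← hXY, Finset.coe_insert, Set.image_insert_eq]
        rcases Finset.eq_empty_or_nonempty Y with hYe | hYne
        · have : X = {m+2} := by rw [← hXY, hYe]; rfl
          subst this
          rw [hJeq, hYe]
          simpa using M.mem_closure_self (e {m+2}) haE
        · have hpara := hA Y hYne hYss
          obtain ⟨-, -, hcl⟩ := hpara
          rw [hXY] at hcl
          have hcl2 : e X ∈ M.closure (insert (e {m+2}) {e Y}) :=
            contract_closure_subset' ha _ hcl
          have hYcl : e Y ∈ M.closure ((fun i => e {i}) '' (Y : Set ℕ)) :=
            ih hT1 Y hYne hYss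
          rw [hJeq]
          refine M.closure_subset_closure_of_subset_closure ?_ hcl2
          refine insert_subset (M.mem_closure_of_mem' (mem_insert _ _) haE) ?_
          refine singleton_subset_iff.mpr ?_
          exact M.closure_subset_closure (subset_insert _ _) hYcl
      · have hXss' : X ⊆ Finset.Icc 1 (m+1) := by
          intro i hi
          have h1 := hXss hi
          rw [Finset.mem_Icc] at h1 ⊢
          have : i ≠ m + 2 := fun h => hmem (h ▸ hi)
          omega
        exact ih hT1 X hXne hXss'

lemma tower_joints_indep : ∀ n {M : Matroid α} {e : Finset ℕ → α}, IsTower M n e →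
    ∀ X : Finset ℕ, X ⊆ Finset.Icc 1 n → M.Indep ((fun i => e {i}) '' (X : Set ℕ)) := by
  intro n
  induction n with
  | zero => intro M e h; exact h.elim
  | succ p ih =>
    match p with
    | 0 =>
      intro M e h X hXss
      rw [Finset.Icc_self] at hXss
      rcases Finset.subset_singleton_iff.mp hXss with rfl | rfl
      · simp only [Finset.coe_empty, Set.image_empty]
        exact M.empty_indep
      · have h' : M.Indep {e {1}} := h
        simpa using h'
    | m+1 =>
      intro M e h X hXss
      have ha : M.Indep {e {m+2}} := tower_top_indep h
      obtain ⟨hA, hB, hT1, hTN, hT2, hTN2⟩ := h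
      by_cases hmem : m + 2 ∈ X
      · set Y := X.erase (m+2) with hYdef
        have hXY : insert (m+2) Y = X := Finset.insert_erase hmem
        have hYss : Y ⊆ Finset.Icc 1 (m+1) := by
          intro i hi
          have h1 := hXss (Finset.erase_subset _ _ hi)
          rw [Finset.mem_Icc] at h1 ⊢
          have : i ≠ m + 2 := (Finset.mem_erase.mp hi).1
          omega
        have hNY : (contract M {e {m+2}}).Indep ((fun i => e {i}) '' (Y : Set ℕ)) :=
          ih hTN Y hYss
        have h2 := (contract_indep_iff' ha).mp hNY
        have hJeq : ((fun i => e {i}) '' (X : Set ℕ)) =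
            insert (e {m+2}) ((fun i => e {i}) '' (Y : Set ℕ)) := by
          rw [← hXY, Finset.coe_insert, Set.image_insert_eq]
        rw [hJeq]
        exact h2.1
      · have hXss' : X ⊆ Finset.Icc 1 (m+1) := by
          intro i hi
          have h1 := hXss hi
          rw [Finset.mem_Icc] at h1 ⊢
          have : i ≠ m + 2 := fun h => hmem (h ▸ hi)
          omega
        exact ih hT1 X hXss'

lemma exists_nonpara {m : ℕ} (h : IsTower M (m+2) e) :
    ∃ i, 1 ≤ i ∧ i ≤ m+1 ∧ ¬ Para M (e {i}) (e (insert (m+2) {i})) := by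
  by_contra hc
  push_neg at hc
  have hJall := tower_joints_indep (m+2) h
  have ha' : M.Indep {e {m+2}} := tower_top_indep h
  obtain ⟨hA, ⟨X, hXne, hXss, hXnp⟩, hT1, hTN, hT2, hTN2⟩ := h
  apply hXnp
  set a := e {m+2} with hadef
  have ha : M.Indep {a} := ha'
  obtain ⟨hN1, hN2, hN3⟩ := hA X hXne hXss
  have hMx : M.Indep {e X} := indep_of_contract_indep ha hN1
  have hMy : M.Indep {e (insert (m+2) X)} := indep_of_contract_indep ha hN2
  refine ⟨hMx, hMy, ?_⟩
  set J : Set α := (fun i => e {i}) '' (X : Set ℕ) with hJdef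
  have hsp1 : e X ∈ M.closure J := tower_spanning (m+1) hT1 X hXne hXss
  have hsp2 : e (insert (m+2) X) ∈ M.closure J := by
    have h2 := tower_spanning (m+1) hT2 X hXne hXss
    refine M.closure_subset_closure_of_subset_closure ?_ h2
    rintro _ ⟨i, hi, rfl⟩
    have hiX : i ∈ X := hi
    have hib := Finset.mem_Icc.mp (hXss hiX)
    have hpara := hc i hib.1 hib.2
    exact M.closure_subset_closure (singleton_subset_iff.mpr (Set.mem_image_of_mem _ hi)) hpara.2.2
  have hcl : e (insert (m+2) X) ∈ M.closure (insert a {e X}) :=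
    contract_closure_subset' ha _ hN3
  have hJX' : M.Indep (insert a J) := by
    have := hJall (insert (m+2) X) (by
      intro i hi
      rcases Finset.mem_insert.mp hi with rfl | hi'
      · rw [Finset.mem_Icc]; omega
      · have := Finset.mem_Icc.mp (hXss hi'); rw [Finset.mem_Icc]; omega)
    rwa [Finset.coe_insert, Set.image_insert_eq] at this
  have haJ : a ∉ J := by
    have hNJ : (contract M {a}).Indep J := tower_joints_indep (m+1) hTN X hXss
    intro hmem
    exact (hNJ.subset_ground hmem).2 rfl
  have hanotcl : a ∉ M.closure J := by
    have := hJX'.notMem_closure_sdiff_of_mem (mem_insert a J)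
    rwa [show insert a J \ {a} = J from by
      rw [insert_diff_of_mem _ (rfl : a ∈ {a}), diff_singleton_eq_self haJ]] at this
  by_contra hne
  have hex := Matroid.mem_closure_insert hne hcl
  exact hanotcl (M.closure_subset_closure_of_subset_closure
    (insert_subset hsp2 (singleton_subset_iff.mpr hsp1)) hex)

end Towers


theorem statement16 {α : Type*} (n : ℕ) (M : Matroid α) (e : Finset ℕ → α)
    (hT : IsTower M n e) (k : ℕ) (hk1 : 1 < k) (hk2 : k ≤ n) :
    ∃ i, 1 ≤ i ∧ i < k ∧
      IsCircuit M {e {i}, e {i, k}, e {k}} ∧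
      ({e {i}, e {i, k}, e {k}} : Set α).ncard = 3 := by
  have hTk : IsTower M k e := isTower_of_le n hT k (by omega) hk2
  obtain ⟨m, rfl⟩ : ∃ m, k = m + 2 := ⟨k - 2, by omega⟩
  obtain ⟨i, hi1, hi2, hnp⟩ := exists_nonpara hTk
  have ha' : M.Indep {e {m+2}} := tower_top_indep hTk
  obtain ⟨hA, hB, hT1, hTN, hT2, hTN2⟩ := hTk
  set a := e {m+2} with hadef
  set b := e {i} with hbdef
  set c := e (insert (m+2) {i}) with hcdef
  have ha : M.Indep {a} := ha'
  have haE : a ∈ M.E := ha.subset_ground rfl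
  have hss : ({i} : Finset ℕ) ⊆ Finset.Icc 1 (m+1) := by
    intro j hj
    rw [Finset.mem_singleton] at hj
    subst hj
    rw [Finset.mem_Icc]; omega
  obtain ⟨hNb, hNc, hccl⟩ := hA {i} (Finset.singleton_nonempty i) hss
  have hab := ((contract_indep_iff' ha).mp hNb).1
  have hac := ((contract_indep_iff' ha).mp hNc).1
  have hb : M.Indep {b} := hab.subset (subset_insert _ _)
  have hcI : M.Indep {c} := hac.subset (subset_insert _ _)
  have hbE : b ∈ M.E := hb.subset_ground rfl
  have hcE : c ∈ M.E := hcI.subset_ground rfl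
  have hba : b ≠ a := (hNb.subset_ground rfl).2
  have hca : c ≠ a := (hNc.subset_ground rfl).2
  have hncl : c ∉ M.closure {b} := fun h => hnp ⟨hb, hcI, h⟩
  have hcb : c ≠ b := fun h => hncl (h ▸ M.mem_closure_self b hbE)
  have hIbc : M.Indep {b, c} := by
    have h1 := (hb.insert_indep_iff_of_notMem (by simpa using hcb)).mpr ⟨hcE, hncl⟩
    rwa [show (insert c {b} : Set α) = {b, c} from Set.pair_comm c b] at h1
  have hIba : M.Indep {b, a} := by
    rwa [show (insert a {b} : Set α) = {b, a} from Set.pair_comm a b] at hab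
  have hIca : M.Indep {c, a} := by
    rwa [show (insert a {c} : Set α) = {c, a} from Set.pair_comm a c] at hac
  have hcmem : c ∈ M.closure {b, a} := by
    have h1 := contract_closure_subset' ha {b} hccl
    rwa [show (insert a {b} : Set α) = {b, a} from Set.pair_comm a b] at h1
  have hdep : M.Dep {b, c, a} := by
    refine ⟨fun hind => ?_, insert_subset hbE (insert_subset hcE
      (singleton_subset_iff.mpr haE))⟩
    rw [Set.insert_comm] at hind
    have h2 := hind.notMem_closure_sdiff_of_mem (mem_insert c {b, a})
    rw [show (insert c {b, a} : Set α) \ {c} = {b, a} from ?_] at h2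
    · exact h2 hcmem
    · rw [insert_diff_of_mem _ (rfl : c ∈ {c}),
        diff_singleton_eq_self (by simp [hcb, hca] : c ∉ ({b, a} : Set α))]
  refine ⟨i, hi1, by omega, ?_, ?_⟩ <;>
    rw [show ({i, m+2} : Finset ℕ) = insert (m+2) {i} from Finset.pair_comm i (m+2)]
  · refine ⟨hdep, ?_⟩
    intro D hD hDdep
    obtain ⟨x, hxC, hxD⟩ := Set.exists_of_ssubset hD
    apply hDdep.not_indep
    simp only [Set.mem_insert_iff, Set.mem_singleton_iff] at hxC
    rcases hxC with rfl | rfl | rfl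
    · refine hIca.subset fun z hz => ?_
      rcases hD.1 hz with rfl | h2
      · exact absurd hz hxD
      · exact h2
    · refine hIba.subset fun z hz => ?_
      rcases hD.1 hz with h1 | h2
      · exact Or.inl h1
      rcases h2 with rfl | h3
      · exact absurd hz hxD
      · exact Or.inr h3
    · refine hIbc.subset fun z hz => ?_
      rcases hD.1 hz with h1 | h2
      · exact Or.inl h1
      rcases h2 with h3 | rfl
      · exact Or.inr h3
      · exact absurd hz hxD
  · rw [Set.ncard_insert_of_notMem (by simp [hcb.symm, hba] : b ∉ ({c, a} : Set α)),
      Set.ncard_pair hca]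


end Paper
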